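/- If t is a positive integer with t ≡ 5 or 9 (mod 12), then c₃(t) = (t³ − 16t² + 73t − 90)/6. -/

import Mathlib

/-- A 3×3 magic square with entries bounded above (strictly) by `t`: pairwise distinct
positive integer entries less than `t`, with all row sums, column sums, and both main
diagonal sums equal to one another. -/
def IsBoundedMagicSquare3 (t : ℕ) (M : Matrix (Fin 3) (Fin 3) ℕ) : Prop :=
  (∀ i j, 0 < M i j ∧ M i j < t) ∧
  (Function.Injective fun p : Fin 3 × Fin 3 => M p.1 p.2) ∧
  ∃ s, (∀ i, ∑ j, M i j = s) ∧ (∀ j, ∑ i, M i j = s) ∧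
    M 0 0 + M 1 1 + M 2 2 = s ∧ M 0 2 + M 1 1 + M 2 0 = s

/-- The number of 3×3 magic squares all of whose entries are less than `t`. -/
noncomputable def c3 (t : ℕ) : ℕ :=
  Set.ncard {M : Matrix (Fin 3) (Fin 3) ℕ | IsBoundedMagicSquare3 t M}


open Finset

def pmat (a b c : ℤ) : Matrix (Fin 3) (Fin 3) ℤ :=
  !![c-b, c+a+b, c-a; c-a+b, c, c+a-b; c+a, c-a-b, c+b]

def nmat (a b c : ℤ) : Matrix (Fin 3) (Fin 3) ℕ := fun i j => (pmat a b c i j).toNat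

def pcond (t : ℕ) (a b c : ℤ) : Prop :=
  a ≠ 0 ∧ b ≠ 0 ∧ a ≠ b ∧ a + b ≠ 0 ∧ a ≠ 2*b ∧ b ≠ 2*a ∧ a + 2*b ≠ 0 ∧ b + 2*a ≠ 0 ∧
  1 ≤ c - a - b ∧ 1 ≤ c + a - b ∧ 1 ≤ c - a + b ∧ 1 ≤ c + a + b ∧
  c + a + b ≤ (t:ℤ) - 1 ∧ c - a - b ≤ (t:ℤ) - 1 ∧ c + a - b ≤ (t:ℤ) - 1 ∧ c - a + b ≤ (t:ℤ) - 1

instance (t : ℕ) (a b c : ℤ) : Decidable (pcond t a b c) := by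
  unfold pcond; infer_instance

noncomputable def paramFinset (t : ℕ) : Finset (ℤ × ℤ × ℤ) :=
  ((Icc (-(t:ℤ)) t) ×ˢ (Icc (-(t:ℤ)) t) ×ˢ (Icc 0 (t:ℤ))).filter
    fun p => pcond t p.1 p.2.1 p.2.2

lemma nmat_inj (a b c : ℤ)
    (c1 : a ≠ 0) (c2 : b ≠ 0) (c3 : a ≠ b) (c4 : a + b ≠ 0) (c5 : a ≠ 2*b) (c6 : b ≠ 2*a)
    (c7 : a + 2*b ≠ 0) (c8 : b + 2*a ≠ 0)
    (d1 : 1 ≤ c - a - b) (d2 : 1 ≤ c + a - b) (d3 : 1 ≤ c - a + b) (d4 : 1 ≤ c + a + b) :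
    Function.Injective fun p : Fin 3 × Fin 3 => nmat a b c p.1 p.2 := by
  rintro ⟨p1, p2⟩ ⟨q1, q2⟩ hpq
  fin_cases p1 <;> fin_cases p2 <;> fin_cases q1 <;> fin_cases q2 <;>
    simp only [nmat, pmat, Matrix.cons_val', Matrix.cons_val_zero, Matrix.cons_val_one,
      Matrix.head_cons, Matrix.empty_val', Matrix.cons_val_fin_one, Matrix.head_fin_const,
      Fin.isValue, Matrix.cons_val_two, Matrix.tail_cons, Matrix.of_apply,
      Matrix.cons_val_succ, Fin.zero_eta, Fin.mk_one,
      show (⟨2,by omega⟩ : Fin 3) = 2 from rfl] at hpq <;>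
    first
      | rfl
      | (exfalso; omega)

set_option maxHeartbeats 1000000 in
lemma magic_set_eq (t : ℕ) :
    {M : Matrix (Fin 3) (Fin 3) ℕ | IsBoundedMagicSquare3 t M} =
      ↑((paramFinset t).image fun p => nmat p.1 p.2.1 p.2.2) := by
  ext M
  simp only [Set.mem_setOf_eq, Finset.coe_image, Set.mem_image, Finset.mem_coe,
    paramFinset, Finset.mem_filter, Finset.mem_product, Finset.mem_Icc]
  constructor
  · rintro ⟨hb, hinj, s, hrow, hcol, hd1, hd2⟩
    have h0 := hrow 0; have h1 := hrow 1; have h2 := hrow 2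
    have g0 := hcol 0; have g1 := hcol 1; have g2 := hcol 2
    simp only [Fin.sum_univ_three] at h0 h1 h2 g0 g1 g2
    clear hrow hcol
    have hb' : ∀ i j, 1 ≤ M i j ∧ M i j ≤ t - 1 := by
      intro i j; have := hb i j; omega
    have b00 := hb' 0 0; have b01 := hb' 0 1; have b02 := hb' 0 2
    have b10 := hb' 1 0; have b12 := hb' 1 2
    have b20 := hb' 2 0; have b21 := hb' 2 1; have b22 := hb' 2 2
    have b11 := hb' 1 1
    clear hb hb'
    -- linear identities
    have hs : s = 3 * M 1 1 := by omega
    have i00 : M 0 0 + M 2 2 = 2 * M 1 1 := by omega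
    have i02 : M 0 2 + M 2 0 = 2 * M 1 1 := by omega
    have i01 : M 0 1 + M 1 1 = M 2 0 + M 2 2 := by omega
    have i21 : M 2 1 + M 0 1 = 2 * M 1 1 := by omega
    have i10 : M 1 0 + M 2 0 = M 2 2 + M 1 1 := by omega
    have i12 : M 1 2 + M 2 2 = M 2 0 + M 1 1 := by omega
    clear h0 h1 h2 g0 g1 g2 hd1 hd2 hs
    have hMeq : nmat ((M 2 0 : ℤ) - M 1 1) ((M 2 2 : ℤ) - M 1 1) (M 1 1) = M := by
      funext i j
      fin_cases i <;> fin_cases j <;>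
        simp only [nmat, pmat, Matrix.cons_val', Matrix.cons_val_zero, Matrix.cons_val_one,
          Matrix.head_cons, Matrix.empty_val', Matrix.cons_val_fin_one, Matrix.head_fin_const,
          Fin.isValue, Matrix.cons_val_two, Matrix.tail_cons, Matrix.of_apply,
          Matrix.cons_val_succ, Fin.zero_eta, Fin.mk_one,
          show (⟨2,by omega⟩ : Fin 3) = 2 from rfl] <;>
        omega
    have hne : ∀ (p q : Fin 3 × Fin 3), p ≠ q → M p.1 p.2 ≠ M q.1 q.2 :=
      fun p q hpq hM => hpq (hinj hM)
    have n1 : M 2 0 ≠ M 1 1 := hne (2,0) (1,1) (by decide)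
    have c1 : (M 2 0 : ℤ) - M 1 1 ≠ 0 := by omega
    clear n1
    have n2 : M 2 2 ≠ M 1 1 := hne (2,2) (1,1) (by decide)
    have c2 : (M 2 2 : ℤ) - M 1 1 ≠ 0 := by clear c1; omega
    clear n2
    have n3 : M 2 0 ≠ M 2 2 := hne (2,0) (2,2) (by decide)
    have c3 : (M 2 0 : ℤ) - M 1 1 ≠ (M 2 2 : ℤ) - M 1 1 := by clear c1 c2; omega
    clear n3
    have n4 : M 0 1 ≠ M 1 1 := hne (0,1) (1,1) (by decide)
    have c4 : ((M 2 0 : ℤ) - M 1 1) + ((M 2 2 : ℤ) - M 1 1) ≠ 0 := by clear c1 c2 c3; omega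
    clear n4
    have n5 : M 1 2 ≠ M 2 2 := hne (1,2) (2,2) (by decide)
    have c5 : (M 2 0 : ℤ) - M 1 1 ≠ 2 * ((M 2 2 : ℤ) - M 1 1) := by clear c1 c2 c3 c4; omega
    clear n5
    have n6 : M 1 0 ≠ M 2 0 := hne (1,0) (2,0) (by decide)
    have c6 : (M 2 2 : ℤ) - M 1 1 ≠ 2 * ((M 2 0 : ℤ) - M 1 1) := by clear c1 c2 c3 c4 c5; omega
    clear n6
    have n7 : M 0 1 ≠ M 0 0 := hne (0,1) (0,0) (by decide)
    have c7 : ((M 2 0 : ℤ) - M 1 1) + 2 * ((M 2 2 : ℤ) - M 1 1) ≠ 0 := by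
      clear c1 c2 c3 c4 c5 c6; omega
    clear n7
    have n8 : M 0 1 ≠ M 0 2 := hne (0,1) (0,2) (by decide)
    have c8 : ((M 2 2 : ℤ) - M 1 1) + 2 * ((M 2 0 : ℤ) - M 1 1) ≠ 0 := by
      clear c1 c2 c3 c4 c5 c6 c7; omega
    clear n8 hne hinj
    have P : pcond t ((M 2 0 : ℤ) - M 1 1) ((M 2 2 : ℤ) - M 1 1) (M 1 1) := by
      refine ⟨c1, c2, c3, c4, c5, c6, c7, c8, ?_, ?_, ?_, ?_, ?_, ?_, ?_, ?_⟩ <;>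
        (clear c1 c2 c3 c4 c5 c6 c7 c8; omega)
    clear c1 c2 c3 c4 c5 c6 c7 c8
    refine ⟨((M 2 0 : ℤ) - M 1 1, (M 2 2 : ℤ) - M 1 1, (M 1 1 : ℤ)),
      ⟨⟨⟨?_, ?_⟩, ⟨?_, ?_⟩, ?_, ?_⟩, P⟩, hMeq⟩ <;> dsimp only <;> omega
  · rintro ⟨⟨a, b, c⟩, ⟨-, hc⟩, rfl⟩
    dsimp only at hc ⊢
    obtain ⟨c1, c2, c3', c4, c5, c6, c7, c8, d1, d2, d3, d4, d5, d6, d7, d8⟩ := hc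
    have hinj := nmat_inj a b c c1 c2 c3' c4 c5 c6 c7 c8 d1 d2 d3 d4
    clear c1 c2 c3' c4 c5 c6 c7 c8
    refine ⟨?_, hinj, (3*c).toNat, ?_, ?_, ?_, ?_⟩
    · intro i j
      fin_cases i <;> fin_cases j <;>
        simp only [nmat, pmat, Matrix.cons_val', Matrix.cons_val_zero, Matrix.cons_val_one,
          Matrix.head_cons, Matrix.empty_val', Matrix.cons_val_fin_one, Matrix.head_fin_const,
          Fin.isValue, Matrix.cons_val_two, Matrix.tail_cons, Matrix.of_apply,
          Matrix.cons_val_succ, Fin.zero_eta, Fin.mk_one,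
          show (⟨2,by omega⟩ : Fin 3) = 2 from rfl] <;>
        omega
    · intro i
      fin_cases i <;>
        simp only [Fin.sum_univ_three, nmat, pmat, Matrix.cons_val', Matrix.cons_val_zero,
          Matrix.cons_val_one, Matrix.head_cons, Matrix.empty_val', Matrix.cons_val_fin_one,
          Matrix.head_fin_const, Fin.isValue, Matrix.cons_val_two, Matrix.tail_cons,
          Matrix.of_apply, Matrix.cons_val_succ, Fin.zero_eta, Fin.mk_one,
          show (⟨2,by omega⟩ : Fin 3) = 2 from rfl] <;>
        omega
    · intro j
      fin_cases j <;>
        simp only [Fin.sum_univ_three, nmat, pmat, Matrix.cons_val', Matrix.cons_val_zero,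
          Matrix.cons_val_one, Matrix.head_cons, Matrix.empty_val', Matrix.cons_val_fin_one,
          Matrix.head_fin_const, Fin.isValue, Matrix.cons_val_two, Matrix.tail_cons,
          Matrix.of_apply, Matrix.cons_val_succ, Fin.zero_eta, Fin.mk_one,
          show (⟨2,by omega⟩ : Fin 3) = 2 from rfl] <;>
        omega
    · simp only [nmat, pmat, Matrix.cons_val', Matrix.cons_val_zero, Matrix.cons_val_one,
        Matrix.head_cons, Matrix.empty_val', Matrix.cons_val_fin_one, Matrix.head_fin_const,
        Fin.isValue, Matrix.cons_val_two, Matrix.tail_cons, Matrix.of_apply,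
        Matrix.cons_val_succ]; omega
    · simp only [nmat, pmat, Matrix.cons_val', Matrix.cons_val_zero, Matrix.cons_val_one,
        Matrix.head_cons, Matrix.empty_val', Matrix.cons_val_fin_one, Matrix.head_fin_const,
        Fin.isValue, Matrix.cons_val_two, Matrix.tail_cons, Matrix.of_apply,
        Matrix.cons_val_succ]; omega

lemma param_card (t : ℕ) :
    ((paramFinset t).image fun p => nmat p.1 p.2.1 p.2.2).card = (paramFinset t).card := by
  apply Finset.card_image_of_injOn
  rintro ⟨a, b, c⟩ hp ⟨a', b', c'⟩ hq hpq
  simp only [paramFinset, Finset.mem_coe, Finset.mem_filter] at hp hq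
  obtain ⟨-, -, -, -, -, -, -, -, -, d1, d2, d3, d4, -⟩ := hp.2
  obtain ⟨-, -, -, -, -, -, -, -, -, e1, e2, e3, e4, -⟩ := hq.2
  have h11 := congrFun (congrFun hpq 1) 1
  have h20 := congrFun (congrFun hpq 2) 0
  have h22 := congrFun (congrFun hpq 2) 2
  simp only [nmat, pmat, Matrix.cons_val', Matrix.cons_val_zero, Matrix.cons_val_one,
    Matrix.head_cons, Matrix.empty_val', Matrix.cons_val_fin_one, Matrix.head_fin_const,
    Fin.isValue, Matrix.cons_val_two, Matrix.tail_cons, Matrix.of_apply,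
    Matrix.cons_val_succ] at h11 h20 h22
  have : c = c' := by omega
  have : a = a' := by omega
  have : b = b' := by omega
  simp_all

def qcond (t : ℕ) (x y c : ℕ) : Prop :=
  1 ≤ x ∧ 1 ≤ y ∧ x ≠ y ∧ x ≠ 2*y ∧ y ≠ 2*x ∧ x + y + 1 ≤ c ∧ c + x + y + 1 ≤ t

instance (t x y c : ℕ) : Decidable (qcond t x y c) := by
  unfold qcond; infer_instance

def nQ (t : ℕ) : Finset (ℕ × ℕ × ℕ) :=
  ((range t) ×ˢ (range t) ×ˢ (range t)).filter fun p => qcond t p.1 p.2.1 p.2.2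

def sgn (s : Bool) (x : ℕ) : ℤ := if s then (x:ℤ) else -(x:ℤ)

lemma sgn_true (x : ℕ) : sgn true x = x := rfl
lemma sgn_false (x : ℕ) : sgn false x = -(x:ℤ) := rfl

lemma param_eq_image (t : ℕ) :
    paramFinset t = ((univ ×ˢ univ ×ˢ nQ t).image
      fun q : Bool × Bool × (ℕ × ℕ × ℕ) =>
        ((sgn q.1 q.2.2.1, sgn q.2.1 q.2.2.2.1, (q.2.2.2.2 : ℤ)) : ℤ × ℤ × ℤ)) := by
  ext ⟨a, b, c⟩
  simp only [paramFinset, Finset.mem_filter, Finset.mem_product, Finset.mem_Icc,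
    Finset.mem_image, Finset.mem_univ, true_and, nQ, Finset.mem_range, Prod.exists,
    Prod.mk.injEq]
  constructor
  · rintro ⟨⟨hma, hmb, hmc⟩, c1, c2, c3, c4, c5, c6, c7, c8,
      d1, d2, d3, d4, d5, d6, d7, d8⟩
    by_cases ha : 0 ≤ a <;> by_cases hb : 0 ≤ b
    · exact ⟨true, true, a.natAbs, b.natAbs, c.toNat, ⟨⟨by omega, by omega, by omega⟩,
        by unfold qcond; omega⟩, by simp only [sgn_true, sgn_false]; omega, by simp only [sgn_true, sgn_false]; omega, by omega⟩
    · exact ⟨true, false, a.natAbs, b.natAbs, c.toNat, ⟨⟨by omega, by omega, by omega⟩,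
        by unfold qcond; omega⟩, by simp only [sgn_true, sgn_false]; omega, by simp only [sgn_true, sgn_false]; omega, by omega⟩
    · exact ⟨false, true, a.natAbs, b.natAbs, c.toNat, ⟨⟨by omega, by omega, by omega⟩,
        by unfold qcond; omega⟩, by simp only [sgn_true, sgn_false]; omega, by simp only [sgn_true, sgn_false]; omega, by omega⟩
    · exact ⟨false, false, a.natAbs, b.natAbs, c.toNat, ⟨⟨by omega, by omega, by omega⟩,
        by unfold qcond; omega⟩, by simp only [sgn_true, sgn_false]; omega, by simp only [sgn_true, sgn_false]; omega, by omega⟩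
  · rintro ⟨s1, s2, x, y, cc, ⟨⟨hx, hy, hcc⟩, hq⟩, rfl, rfl, rfl⟩
    unfold qcond at hq
    cases s1 <;> cases s2 <;>
      refine ⟨by simp only [sgn_true, sgn_false]; omega, ?_⟩ <;>
      simp only [sgn_true, sgn_false, pcond] <;>
      constructorm* _ ∧ _ <;> push_cast <;> omega

lemma param_card_eq (t : ℕ) : (paramFinset t).card = 4 * (nQ t).card := by
  rw [param_eq_image, Finset.card_image_of_injOn, Finset.card_product, Finset.card_product,
    Finset.card_univ]
  · simp only [Fintype.card_bool]; ring
  · rintro ⟨s1, s2, x, y, cc⟩ hm ⟨s1', s2', x', y', cc'⟩ hm' heq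
    simp only [Finset.coe_product, Set.mem_prod, Finset.mem_coe, Finset.mem_univ, true_and,
      nQ, Finset.mem_filter, Finset.mem_product, Finset.mem_range] at hm hm'
    have hx : 1 ≤ x ∧ 1 ≤ y := by have := hm.2; unfold qcond at this; omega
    have hx' : 1 ≤ x' ∧ 1 ≤ y' := by have := hm'.2; unfold qcond at this; omega
    simp only [Prod.mk.injEq] at heq ⊢
    cases s1 <;> cases s1' <;> cases s2 <;> cases s2' <;>
      simp only [sgn_true, sgn_false] at heq <;>
      first
        | exact ⟨rfl, rfl, by omega, by omega, by omega⟩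
        | (exfalso; omega)

lemma nQ_card_sum (t : ℕ) :
    (nQ t).card = ∑ x ∈ range t, ∑ y ∈ range t,
      (if 1 ≤ x ∧ 1 ≤ y ∧ x ≠ y ∧ x ≠ 2*y ∧ y ≠ 2*x then t - (2*x+2*y+1) else 0) := by
  rw [nQ, Finset.card_filter, Finset.sum_product]
  refine Finset.sum_congr rfl fun x hx => ?_
  rw [Finset.sum_product]
  refine Finset.sum_congr rfl fun y hy => ?_
  by_cases hP : 1 ≤ x ∧ 1 ≤ y ∧ x ≠ y ∧ x ≠ 2*y ∧ y ≠ 2*x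
  · rw [if_pos hP, ← Finset.card_filter]
    have hfe : (range t).filter (fun c => qcond t x y c) = Ico (x+y+1) (t - (x+y)) := by
      ext c
      rw [Finset.mem_filter]
      simp only [Finset.mem_filter, Finset.mem_range, Finset.mem_Ico, qcond]
      omega
    rw [hfe, Nat.card_Ico]
    omega
  · rw [if_neg hP]
    apply Finset.sum_eq_zero
    intro c hc
    have hnq : ¬ qcond t x y c := by unfold qcond; omega
    rw [if_neg hnq]


lemma sum_linearE (L : ℕ) (C A : ℤ) :
    ∑ x ∈ Icc 1 L, (C - 2*A*x) = L*C - A*L*(L+1) := by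
  induction L with
  | zero => simp
  | succ n ih =>
    rw [Finset.sum_Icc_succ_top (by omega)]
    push_cast
    linear_combination ih

lemma sum_quad (L : ℕ) : (∑ x ∈ Icc 1 L, ((x:ℤ)-1)*x) * 3 = ((L:ℤ)-1)*L*(L+1) := by
  induction L with
  | zero => simp
  | succ n ih =>
    rw [Finset.sum_Icc_succ_top (by omega)]
    push_cast
    linear_combination ih

lemma sum_reflect (L : ℕ) (f : ℕ → ℤ) :
    ∑ x ∈ Icc 1 L, f (L+1-x) = ∑ x ∈ Icc 1 L, f x := by
  apply Finset.sum_nbij' (fun x => L+1-x) (fun x => L+1-x) <;>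
    (intro a ha; simp only [Finset.mem_Icc] at *) <;> omega

/-- generic 1-D evaluation -/
lemma oneD (t L A : ℕ) (hLt : L < t)
    (hzero : ∀ x : ℕ, L < x → t ≤ 2*A*x + 1) (hpos : ∀ x : ℕ, x ≤ L → 2*A*x+1 ≤ t) :
    ((∑ x ∈ range t, if 1 ≤ x then t - (2*A*x+1) else 0 : ℕ) : ℤ)
      = L*((t:ℤ)-1) - A*L*(L+1) := by
  have h1 : (∑ x ∈ range t, if 1 ≤ x then t - (2*A*x+1) else 0 : ℕ)
      = ∑ x ∈ Icc 1 L, (t - (2*A*x+1)) := by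
    rw [← Finset.sum_subset (s₁ := Icc 1 L) (fun x hx => by
        simp only [Finset.mem_Icc, Finset.mem_range] at *; omega)
      (fun x hx hnx => by
        simp only [Finset.mem_Icc, Finset.mem_range] at hx hnx
        have := hzero x
        split_ifs <;> omega)]
    refine Finset.sum_congr rfl fun x hx => ?_
    simp only [Finset.mem_Icc] at hx
    rw [if_pos (by omega)]
  rw [h1, Nat.cast_sum]
  rw [Finset.sum_congr rfl (fun x hx => by
    simp only [Finset.mem_Icc] at hx
    have : ((t - (2*A*x+1) : ℕ) : ℤ) = ((t:ℤ)-1) - 2*(A:ℤ)*x := by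
      rw [Nat.cast_sub (hpos x hx.2)]; push_cast; ring
    exact this)]
  rw [sum_linearE]

/-- generic 2-D evaluation, t = 2K+3 -/
lemma twoD (K : ℕ) :
    3 * ((∑ x ∈ range (2*K+3), ∑ y ∈ range (2*K+3),
        if 1 ≤ x ∧ 1 ≤ y then (2*K+3) - (2*x+2*y+1) else 0 : ℕ) : ℤ)
      = ((K:ℤ)-1)*K*(K+1) := by
  have h1 : (∑ x ∈ range (2*K+3), ∑ y ∈ range (2*K+3),
        if 1 ≤ x ∧ 1 ≤ y then (2*K+3) - (2*x+2*y+1) else 0 : ℕ)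
      = ∑ x ∈ Icc 1 K, ∑ y ∈ Icc 1 (K-x), ((2*K+3) - (2*x+2*y+1)) := by
    rw [← Finset.sum_subset (s₁ := Icc 1 K) (fun x hx => by
        simp only [Finset.mem_Icc, Finset.mem_range] at *; omega)
      (fun x hx hnx => by
        simp only [Finset.mem_Icc, Finset.mem_range] at hx hnx
        apply Finset.sum_eq_zero
        intro y hy
        simp only [Finset.mem_range] at hy
        split_ifs <;> omega)]
    refine Finset.sum_congr rfl fun x hx => ?_
    simp only [Finset.mem_Icc] at hx
    rw [← Finset.sum_subset (s₁ := Icc 1 (K-x)) (fun y hy => by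
        simp only [Finset.mem_Icc, Finset.mem_range] at *; omega)
      (fun y hy hny => by
        simp only [Finset.mem_Icc, Finset.mem_range] at hy hny
        split_ifs <;> omega)]
    refine Finset.sum_congr rfl fun y hy => ?_
    simp only [Finset.mem_Icc] at hy
    rw [if_pos (by omega)]
  rw [h1, Nat.cast_sum]
  have h2 : ∀ x ∈ Icc 1 K, ((∑ y ∈ Icc 1 (K-x), ((2*K+3) - (2*x+2*y+1)) : ℕ) : ℤ)
      = (((K:ℤ)+1-x)-1)*((K:ℤ)+1-x) := by
    intro x hx
    simp only [Finset.mem_Icc] at hx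
    rw [Nat.cast_sum]
    rw [Finset.sum_congr rfl (fun y hy => by
      simp only [Finset.mem_Icc] at hy
      have : (((2*K+3) - (2*x+2*y+1) : ℕ) : ℤ) = ((2*(K:ℤ)+2-2*x) - 2*1*y) := by
        rw [Nat.cast_sub (by omega)]; push_cast; ring
      exact this)]
    rw [sum_linearE]
    have : ((K - x : ℕ) : ℤ) = (K:ℤ) - x := by omega
    rw [this]; ring
  rw [Finset.sum_congr rfl h2]
  have h3 : ∀ x ∈ Icc 1 K, (((K:ℤ)+1-x)-1)*((K:ℤ)+1-x)
      = (((K+1-x : ℕ) : ℤ)-1)*((K+1-x : ℕ) : ℤ) := by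
    intro x hx
    simp only [Finset.mem_Icc] at hx
    have : ((K + 1 - x : ℕ) : ℤ) = (K:ℤ) + 1 - x := by omega
    rw [this]
  have hre : ∑ x ∈ Icc 1 K, (((K+1-x : ℕ) : ℤ)-1)*((K+1-x : ℕ) : ℤ)
      = ∑ x ∈ Icc 1 K, ((x:ℤ)-1)*x := sum_reflect K (fun n => ((n:ℤ)-1)*n)
  rw [Finset.sum_congr rfl h3, hre, mul_comm]
  exact sum_quad K

lemma collapseE (t : ℕ) :
    ∑ x ∈ range t, ∑ y ∈ range t, (if 1 ≤ y ∧ x = y then t - (2*x+2*y+1) else 0)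
      = ∑ x ∈ range t, (if 1 ≤ x then t - (2*2*x+1) else 0) := by
  refine Finset.sum_congr rfl fun x hx => ?_
  simp only [Finset.mem_range] at hx
  rw [Finset.sum_eq_single x (fun y _ hyx => by
      rw [if_neg]; rintro ⟨-, rfl⟩; exact hyx rfl)
    (fun hxx => by simp only [Finset.mem_range] at hxx; omega)]
  split_ifs <;> omega

lemma collapseD (t : ℕ) :
    ∑ x ∈ range t, ∑ y ∈ range t, (if 1 ≤ x ∧ y = 2*x then t - (2*x+2*y+1) else 0)
      = ∑ x ∈ range t, (if 1 ≤ x then t - (2*3*x+1) else 0) := by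
  refine Finset.sum_congr rfl fun x hx => ?_
  simp only [Finset.mem_range] at hx
  rw [Finset.sum_eq_single (2*x) (fun y _ hyx => by
      rw [if_neg]; rintro ⟨-, rfl⟩; exact hyx rfl)
    (fun hxx => by simp only [Finset.mem_range] at hxx; split_ifs <;> omega)]
  split_ifs <;> omega

lemma collapseC (t : ℕ) :
    ∑ x ∈ range t, ∑ y ∈ range t, (if 1 ≤ y ∧ x = 2*y then t - (2*x+2*y+1) else 0)
      = ∑ y ∈ range t, (if 1 ≤ y then t - (2*3*y+1) else 0) := by
  rw [Finset.sum_comm]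
  refine Finset.sum_congr rfl fun y hy => ?_
  simp only [Finset.mem_range] at hy
  rw [Finset.sum_eq_single (2*y) (fun x _ hxy => by
      rw [if_neg]; rintro ⟨-, rfl⟩; exact hxy rfl)
    (fun hxx => by simp only [Finset.mem_range] at hxx; split_ifs <;> omega)]
  split_ifs <;> omega

lemma splitSum (t : ℕ) :
    ∑ x ∈ range t, ∑ y ∈ range t, (if 1 ≤ x ∧ 1 ≤ y then t - (2*x+2*y+1) else 0)
      = (∑ x ∈ range t, ∑ y ∈ range t,
          (if 1 ≤ x ∧ 1 ≤ y ∧ x ≠ y ∧ x ≠ 2*y ∧ y ≠ 2*x then t - (2*x+2*y+1) else 0))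
        + (∑ x ∈ range t, ∑ y ∈ range t, (if 1 ≤ y ∧ x = y then t - (2*x+2*y+1) else 0))
        + (∑ x ∈ range t, ∑ y ∈ range t, (if 1 ≤ y ∧ x = 2*y then t - (2*x+2*y+1) else 0))
        + (∑ x ∈ range t, ∑ y ∈ range t, (if 1 ≤ x ∧ y = 2*x then t - (2*x+2*y+1) else 0)) := by
  rw [← Finset.sum_add_distrib, ← Finset.sum_add_distrib, ← Finset.sum_add_distrib]
  refine Finset.sum_congr rfl fun x _ => ?_
  rw [← Finset.sum_add_distrib, ← Finset.sum_add_distrib, ← Finset.sum_add_distrib]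
  refine Finset.sum_congr rfl fun y _ => ?_
  split_ifs <;> omega


lemma c3_card (t : ℕ) : c3 t = (paramFinset t).card := by
  rw [c3, magic_set_eq, Set.ncard_coe_finset, param_card]

lemma nQcard5 (m : ℕ) : ((nQ (12*m+5)).card : ℤ) * 3 = 216*(m:ℤ)^3 - 18*(m:ℤ)^2 - 18*(m:ℤ) := by
  have hsplit := splitSum (12*m+5)
  rw [collapseE (12*m+5), collapseC (12*m+5), collapseD (12*m+5), ← nQ_card_sum] at hsplit
  have hB := twoD (6*m+1)
  rw [show 2*(6*m+1)+3 = 12*m+5 by ring] at hB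
  have hE := oneD (12*m+5) (3*m) 2 (by omega) (fun x hx => by omega) (fun x hx => by omega)
  have hC := oneD (12*m+5) (2*m) 3 (by omega) (fun x hx => by omega) (fun x hx => by omega)
  have hcast := congrArg (Nat.cast : ℕ → ℤ) hsplit
  push_cast at hcast
  push_cast at hB hE hC ⊢
  linear_combination hB - 3*hE - 6*hC - 3*hcast

lemma nQcard9 (m : ℕ) : ((nQ (12*m+9)).card : ℤ) * 3 = 216*(m:ℤ)^3 + 198*(m:ℤ)^2 + 42*(m:ℤ) := by
  have hsplit := splitSum (12*m+9)
  rw [collapseE (12*m+9), collapseC (12*m+9), collapseD (12*m+9), ← nQ_card_sum] at hsplit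
  have hB := twoD (6*m+3)
  rw [show 2*(6*m+3)+3 = 12*m+9 by ring] at hB
  have hE := oneD (12*m+9) (3*m+1) 2 (by omega) (fun x hx => by omega) (fun x hx => by omega)
  have hC := oneD (12*m+9) (2*m+1) 3 (by omega) (fun x hx => by omega) (fun x hx => by omega)
  have hcast := congrArg (Nat.cast : ℕ → ℤ) hsplit
  push_cast at hcast
  push_cast at hB hE hC ⊢
  linear_combination hB - 3*hE - 6*hC - 3*hcast

theorem c3_formula_mod12_5_9 (t : ℕ) (ht : 0 < t) (h : t % 12 = 5 ∨ t % 12 = 9) :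
    (c3 t : ℚ) = ((t : ℚ) ^ 3 - 16 * (t : ℚ) ^ 2 + 73 * (t : ℚ) - 90) / 6 := by
  have hc3 : (c3 t : ℤ) = 4 * ((nQ t).card : ℤ) := by
    rw [c3_card, param_card_eq]; push_cast; ring
  rcases h with h5 | h9
  · obtain ⟨m, rfl⟩ : ∃ m, t = 12*m+5 := ⟨t/12, by omega⟩
    have hq := nQcard5 m
    have : (c3 (12*m+5) : ℚ) * 3 = 4 * (216*(m:ℚ)^3 - 18*m^2 - 18*m) := by
      have h1 : (c3 (12*m+5) : ℤ) * 3 = 4 * (216*(m:ℤ)^3 - 18*m^2 - 18*m) := by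
        rw [hc3]; linear_combination 4*hq
      exact_mod_cast congrArg (Int.cast : ℤ → ℚ) h1
    push_cast at this ⊢
    field_simp
    linear_combination 2*this
  · obtain ⟨m, rfl⟩ : ∃ m, t = 12*m+9 := ⟨t/12, by omega⟩
    have hq := nQcard9 m
    have : (c3 (12*m+9) : ℚ) * 3 = 4 * (216*(m:ℚ)^3 + 198*m^2 + 42*m) := by
      have h1 : (c3 (12*m+9) : ℤ) * 3 = 4 * (216*(m:ℤ)^3 + 198*m^2 + 42*m) := by
        rw [hc3]; linear_combination 4*hq
      exact_mod_cast congrArg (Int.cast : ℤ → ℚ) h1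
    push_cast at this ⊢
    field_simp
    linear_combination 2*this
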